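/- In the interior of the light cone {r < t} of ℝ^{1+3}, the D'Alembert operator decomposes in hyperbolic coordinates (s, x) with s = √(t²−r²) as: □v = ∂̄_s∂̄_s v + (2x^a/s) ∂̄_s ∂̄_a v − Σ_a ∂̄_a ∂̄_a v + (3/s) ∂̄_s v, where ∂̄_s = (s/t)∂_t and ∂̄_a = (x^a/t)∂_t + ∂_a, for any C² function v. -/

import Mathlib

noncomputable section

/-- Partial derivative in the `i`-th coordinate direction on `ℝ^m`. -/
def pd {m : ℕ} (u : (Fin m → ℝ) → ℝ) (i : Fin m) (x : Fin m → ℝ) : ℝ :=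
  fderiv ℝ u x (Pi.single i 1)

/-- `s = √(t² − |x|²)` on `ℝ^{1+3}` (index `0` is time). -/
def sfun (p : Fin 4 → ℝ) : ℝ :=
  Real.sqrt ((p 0) ^ 2 - ∑ a : Fin 3, (p a.succ) ^ 2)

/-- The frame field `∂̄_s = (s/t)∂_t` acting on functions of `(t,x)`. -/
def Ds (f : (Fin 4 → ℝ) → ℝ) (p : Fin 4 → ℝ) : ℝ :=
  (sfun p / p 0) * pd f 0 p

/-- The frame field `∂̄_a = (x^a/t)∂_t + ∂_a`. -/
def Da (a : Fin 3) (f : (Fin 4 → ℝ) → ℝ) (p : Fin 4 → ℝ) : ℝ :=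
  (p a.succ / p 0) * pd f 0 p + pd f a.succ p

/-- D'Alembert operator on `ℝ^{1+3}`. -/
def Box (u : (Fin 4 → ℝ) → ℝ) (p : Fin 4 → ℝ) : ℝ :=
  pd (pd u 0) 0 p - ∑ a : Fin 3, pd (pd u a.succ) a.succ p

/-- Coordinate projection as a continuous linear map. -/
def Pj (i : Fin 4) : (Fin 4 → ℝ) →L[ℝ] ℝ := ContinuousLinearMap.proj i

@[simp] lemma Pj_apply (i : Fin 4) (q : Fin 4 → ℝ) : Pj i q = q i := rfl

lemma pd_eval {f : (Fin 4 → ℝ) → ℝ} {L : (Fin 4 → ℝ) →L[ℝ] ℝ} {x : Fin 4 → ℝ}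
    (h : HasFDerivAt f L x) (i : Fin 4) : pd f i x = L (Pi.single i 1) := by
  simp only [pd, h.fderiv]

lemma single_succ_zero (a : Fin 3) : (Pi.single a.succ (1:ℝ) : Fin 4 → ℝ) 0 = 0 :=
  Pi.single_eq_of_ne (Fin.succ_ne_zero a).symm _

lemma single_zero_succ (a : Fin 3) : (Pi.single (0 : Fin 4) (1:ℝ) : Fin 4 → ℝ) a.succ = 0 :=
  Pi.single_eq_of_ne (Fin.succ_ne_zero a) _

lemma single_succ_succ (a b : Fin 3) :
    (Pi.single a.succ (1:ℝ) : Fin 4 → ℝ) b.succ = if b = a then 1 else 0 := by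
  rcases eq_or_ne b a with h | h
  · subst h; simp
  · rw [Pi.single_eq_of_ne (by simpa [Fin.succ_inj] using h), if_neg h]

set_option maxHeartbeats 2000000 in
/-- hyperbolic decomposition of the wave operator inside `{r < t}`:
`□v = ∂̄_s∂̄_s v + (2x^a/s)∂̄_s∂̄_a v − Σ_a ∂̄_a∂̄_a v + (3/s)∂̄_s v`. -/
theorem wave_operator_hyperbolic_decomposition
    (v : (Fin 4 → ℝ) → ℝ) (hv : ContDiff ℝ 2 v)
    (p : Fin 4 → ℝ)
    (hp : Real.sqrt (∑ a : Fin 3, (p a.succ) ^ 2) < p 0) :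
    Box v p =
      Ds (Ds v) p + (∑ a : Fin 3, (2 * p a.succ / sfun p) * Ds (Da a v) p) -
        (∑ a : Fin 3, Da a (Da a v) p) + (3 / sfun p) * Ds v p := by
  have ht : 0 < p 0 := lt_of_le_of_lt (Real.sqrt_nonneg _) hp
  have hr2 : (∑ a : Fin 3, (p a.succ) ^ 2) < (p 0) ^ 2 := (Real.sqrt_lt' ht).mp hp
  have hgp : 0 < (p 0) ^ 2 - ∑ a : Fin 3, (p a.succ) ^ 2 := by linarith
  have hs0 : 0 < sfun p := Real.sqrt_pos.mpr hgp
  have hs2 : sfun p ^ 2 = (p 0) ^ 2 - ∑ a : Fin 3, (p a.succ) ^ 2 := Real.sq_sqrt hgp.le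
  -- calculus infrastructure
  have hvd : Differentiable ℝ v := hv.differentiable (by norm_num)
  have hv1 : ContDiff ℝ 1 (fderiv ℝ v) := hv.fderiv_right (by norm_num)
  set F' := fderiv ℝ (fderiv ℝ v) p with hF'def
  have hF : HasFDerivAt (fderiv ℝ v) F' p := ((hv1.differentiable (by norm_num)) p).hasFDerivAt
  have hsym : ∀ z w, F' z w = F' w z :=
    second_derivative_symmetric (fun y => (hvd y).hasFDerivAt) hF
  have hpd : ∀ i : Fin 4, HasFDerivAt (pd v i)
      ((ContinuousLinearMap.apply ℝ ℝ ((Pi.single i 1 : Fin 4 → ℝ))).comp F') p := fun i => by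
    exact (ContinuousLinearMap.apply ℝ ℝ ((Pi.single i 1 : Fin 4 → ℝ))).hasFDerivAt.comp p hF
  have hcoord : ∀ i : Fin 4, HasFDerivAt (fun q : Fin 4 → ℝ => q i)
      (Pj i) p := fun i => hasFDerivAt_apply i p
  have hinv : HasFDerivAt (fun q : Fin 4 → ℝ => (q 0)⁻¹)
      ((-((p 0) ^ 2)⁻¹) • Pj 0) p :=
    (hasDerivAt_inv ht.ne').comp_hasFDerivAt p (hcoord 0)
  have hgd : HasFDerivAt (fun q : Fin 4 → ℝ => q 0 ^ 2 - ∑ a : Fin 3, q a.succ ^ 2)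
      ((((2:ℕ):ℝ) * p 0 ^ 1) • Pj 0 -
        ∑ a : Fin 3, (((2:ℕ):ℝ) * p a.succ ^ 1) • Pj a.succ) p :=
    ((hasDerivAt_pow 2 (p 0)).comp_hasFDerivAt p (hcoord 0)).fun_sub
      (HasFDerivAt.fun_sum (u := Finset.univ) (A := fun (a : Fin 3) (q : Fin 4 → ℝ) => q a.succ ^ 2) fun (a : Fin 3) _ => (hasDerivAt_pow 2 (p a.succ)).comp_hasFDerivAt p (hcoord a.succ))
  have hsfun : HasFDerivAt sfun
      ((1 / (2 * sfun p)) • ((((2:ℕ):ℝ) * p 0 ^ 1) • Pj 0 -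
        ∑ a : Fin 3, (((2:ℕ):ℝ) * p a.succ ^ 1) • Pj a.succ)) p := by
    exact hgd.sqrt hgp.ne'
  -- key derivative computations
  have hDs_eq : Ds v = fun q => sfun q * (q 0)⁻¹ * pd v 0 q := by
    funext q; rw [Ds, div_eq_mul_inv]
  have hDa_eq : ∀ a : Fin 3, Da a v = fun q => q a.succ * (q 0)⁻¹ * pd v 0 q + pd v a.succ q := by
    intro a; funext q; rw [Da, div_eq_mul_inv]
  have k1 : pd (Ds v) 0 p =
      sfun p / p 0 * F' (Pi.single 0 1) (Pi.single 0 1) +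
        pd v 0 p * ((p 0 ^ 2 - sfun p ^ 2) / (sfun p * p 0 ^ 2)) := by
    rw [hDs_eq]
    have H := (hsfun.fun_mul hinv).fun_mul (hpd 0)
    rw [pd_eval H 0]
    simp [ContinuousLinearMap.comp_apply, ContinuousLinearMap.apply_apply,
      ContinuousLinearMap.add_apply, ContinuousLinearMap.smul_apply,
      ContinuousLinearMap.sub_apply, ContinuousLinearMap.coe_sum', Finset.sum_apply,
      smul_eq_mul, Pi.single_eq_same,
      single_succ_zero, single_zero_succ]
    field_simp
    ring
  have k2 : ∀ a : Fin 3, pd (Da a v) 0 p =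
      p a.succ / p 0 * F' (Pi.single 0 1) (Pi.single 0 1) - pd v 0 p * p a.succ / p 0 ^ 2 +
        F' (Pi.single 0 1) (Pi.single a.succ 1) := by
    intro a
    rw [hDa_eq a]
    have H := (((hcoord a.succ).fun_mul hinv).fun_mul (hpd 0)).fun_add (hpd a.succ)
    rw [pd_eval H 0]
    simp [ContinuousLinearMap.comp_apply, ContinuousLinearMap.apply_apply,
      ContinuousLinearMap.add_apply, ContinuousLinearMap.smul_apply,
      ContinuousLinearMap.sub_apply, smul_eq_mul,
      Pi.single_eq_same, single_succ_zero, single_zero_succ]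
    field_simp
    ring
  have k3 : ∀ a : Fin 3, pd (Da a v) a.succ p =
      p a.succ / p 0 * F' (Pi.single a.succ 1) (Pi.single 0 1) + pd v 0 p / p 0 +
        F' (Pi.single a.succ 1) (Pi.single a.succ 1) := by
    intro a
    rw [hDa_eq a]
    have H := (((hcoord a.succ).fun_mul hinv).fun_mul (hpd 0)).fun_add (hpd a.succ)
    rw [pd_eval H a.succ]
    simp [ContinuousLinearMap.comp_apply, ContinuousLinearMap.apply_apply,
      ContinuousLinearMap.add_apply, ContinuousLinearMap.smul_apply,
      ContinuousLinearMap.sub_apply, smul_eq_mul,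
      Pi.single_eq_same, single_succ_zero, single_zero_succ]
    field_simp
  have k4 : ∀ i j : Fin 4, pd (pd v i) j p = F' (Pi.single j 1) (Pi.single i 1) := by
    intro i j
    rw [pd_eval (hpd i) j]
    simp [ContinuousLinearMap.comp_apply, ContinuousLinearMap.apply_apply]
  -- unfold the statement
  simp only [Box, Ds, Da]
  rw [k1]
  simp only [k2, k3, k4]
  rw [Fin.sum_univ_three] at hs2
  rw [Fin.sum_univ_three, Fin.sum_univ_three, Fin.sum_univ_three]
  rw [hsym (Pi.single (0:Fin 3).succ 1) (Pi.single 0 1),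
      hsym (Pi.single (1:Fin 3).succ 1) (Pi.single 0 1),
      hsym (Pi.single (2:Fin 3).succ 1) (Pi.single 0 1)]
  set t := p 0 with htdef
  set s := sfun p with hsdef
  set T := pd v 0 p with hTdef
  set x0 := p (0:Fin 3).succ
  set x1 := p (1:Fin 3).succ
  set x2 := p (2:Fin 3).succ
  set d00 := F' (Pi.single 0 1) (Pi.single 0 1)
  set m0 := F' (Pi.single (0:Fin 3).succ 1) (Pi.single 0 1)
  set m1 := F' (Pi.single (1:Fin 3).succ 1) (Pi.single 0 1)
  set m2 := F' (Pi.single (2:Fin 3).succ 1) (Pi.single 0 1)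
  set w0 := F' (Pi.single (0:Fin 3).succ 1) (Pi.single (0:Fin 3).succ 1)
  set w1 := F' (Pi.single (1:Fin 3).succ 1) (Pi.single (1:Fin 3).succ 1)
  set w2 := F' (Pi.single (2:Fin 3).succ 1) (Pi.single (2:Fin 3).succ 1)
  have hsne : s ≠ 0 := hs0.ne'
  have htne : t ≠ 0 := ht.ne'
  field_simp
  linear_combination (T - d00 * t) * hs2
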